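/- Let a,b be positive integers and Row(x,y) = ((x-1) mod a, (y-1) mod b) act on {0,…,a-1}×{0,…,b-1}. Define val(x,y) = 2 - [x=a-1] - [y=b-1]. Then for every orbit O of Row, the sum of val over the elements of O equals (2ab - a - b)/gcd(a,b). -/

import Mathlib

open Finset

lemma stmt3_sum_zmod_eq_range (a : ℕ) [NeZero a] (h : ZMod a → ℕ) :
    ∑ x : ZMod a, h x = ∑ k ∈ Finset.range a, h (k : ZMod a) := by
  refine Finset.sum_nbij' (i := fun x => x.val) (j := fun k => (k : ZMod a)) ?_ ?_ ?_ ?_ ?_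
  · intro x _; simp [ZMod.val_lt]
  · intro k _; simp
  · intro x _; exact ZMod.natCast_rightInverse x
  · intro k hk; simp only [Finset.mem_range] at hk; exact ZMod.val_cast_of_lt hk
  · intro x _; rw [ZMod.natCast_rightInverse x]

lemma stmt3_sum_natCast_range_mul (a m : ℕ) (h : ZMod a → ℕ) :
    ∑ k ∈ Finset.range (m * a), h (k : ZMod a)
      = m * ∑ k ∈ Finset.range a, h (k : ZMod a) := by
  induction m with
  | zero => simp
  | succ m ih =>
    rw [Nat.succ_mul, Finset.sum_range_add, ih, Nat.succ_mul]
    congr 1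
    refine Finset.sum_congr rfl fun j _ => ?_
    congr 1
    push_cast
    simp

/-- The valley statistic `val(x,y) = 2 - [x=a-1] - [y=b-1]` sums to
`(2ab - a - b)/gcd(a,b)` over every rowmotion orbit of `C_a × C_b`. -/
theorem stmt_3 (a b : ℕ) (ha : 0 < a) (hb : 0 < b) :
    let Row : ZMod a × ZMod b → ZMod a × ZMod b := fun z => (z.1 - 1, z.2 - 1)
    let val : ZMod a × ZMod b → ℕ := fun z =>
      2 - (if z.1 = (a : ZMod a) - 1 then 1 else 0)
        - (if z.2 = (b : ZMod b) - 1 then 1 else 0)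
    ∀ z : ZMod a × ZMod b,
      (∑ᶠ w ∈ ({w | ∃ k : ℕ, Row^[k] z = w} : Set (ZMod a × ZMod b)), val w)
        = (2 * a * b - a - b) / Nat.gcd a b := by
  intro Row val z
  haveI : NeZero a := ⟨ha.ne'⟩
  haveI : NeZero b := ⟨hb.ne'⟩
  set L := Nat.lcm a b with hLdef
  have haL : a ∣ L := Nat.dvd_lcm_left a b
  have hbL : b ∣ L := Nat.dvd_lcm_right a b
  have hLpos : 0 < L := Nat.pos_of_ne_zero (Nat.lcm_ne_zero ha.ne' hb.ne')
  set g : ℕ → ZMod a × ZMod b := fun k => (z.1 - (k : ZMod a), z.2 - (k : ZMod b)) with hgdef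
  have hiter : ∀ k : ℕ, Row^[k] z = g k := by
    intro k
    induction k with
    | zero => simp [hgdef]
    | succ k ih =>
      rw [Function.iterate_succ_apply', ih]
      simp only [Row, hgdef]
      refine Prod.ext ?_ ?_ <;> · simp only; push_cast; ring
  -- the orbit is the image of range L under g
  have hset : ({w | ∃ k : ℕ, Row^[k] z = w} : Set (ZMod a × ZMod b))
      = ↑((Finset.range L).image g) := by
    ext w
    simp only [Set.mem_setOf_eq, Finset.coe_image, Set.mem_image, Finset.mem_coe,
      Finset.mem_range, hiter]
    constructor
    · rintro ⟨k, rfl⟩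
      refine ⟨k % L, Nat.mod_lt _ hLpos, ?_⟩
      have h1 : ((k % L : ℕ) : ZMod a) = (k : ZMod a) := by
        rw [ZMod.natCast_eq_natCast_iff]
        exact (Nat.mod_modEq k L).of_dvd haL
      have h2 : ((k % L : ℕ) : ZMod b) = (k : ZMod b) := by
        rw [ZMod.natCast_eq_natCast_iff]
        exact (Nat.mod_modEq k L).of_dvd hbL
      simp [hgdef, h1, h2]
    · rintro ⟨k, _, rfl⟩
      exact ⟨k, rfl⟩
  have hinj : Set.InjOn g (Finset.range L) := by
    intro k hk k' hk' hgk
    simp only [Finset.coe_range, Set.mem_Iio] at hk hk'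
    simp only [hgdef, Prod.mk.injEq, sub_right_injective.eq_iff] at hgk
    have h1 : (k : ZMod a) = (k' : ZMod a) := hgk.1
    have h2 : (k : ZMod b) = (k' : ZMod b) := hgk.2
    rw [ZMod.natCast_eq_natCast_iff, Nat.modEq_iff_dvd] at h1 h2
    have hdL : (L : ℤ) ∣ ((k' : ℤ) - k) := by
      have := Int.coe_lcm_dvd h1 h2
      simpa [Int.lcm, hLdef] using this
    have hmod : k ≡ k' [MOD L] := (Nat.modEq_iff_dvd).mpr hdL
    rw [Nat.ModEq, Nat.mod_eq_of_lt hk, Nat.mod_eq_of_lt hk'] at hmod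
    exact hmod
  -- reduce the finsum to a finite sum over range L
  rw [hset, finsum_mem_coe_finset, Finset.sum_image (fun x hx y hy h => hinj hx hy h)]
  -- split val into two indicator sums
  have hval : ∀ k : ℕ, val (g k)
      = (if z.1 - (k : ZMod a) = -1 then 0 else 1)
        + (if z.2 - (k : ZMod b) = -1 then 0 else 1) := by
    intro k
    simp only [val, hgdef, ZMod.natCast_self, zero_sub]
    split_ifs <;> rfl
  rw [Finset.sum_congr rfl (fun k _ => hval k), Finset.sum_add_distrib]
  -- evaluate each indicator sum
  have key : ∀ (n : ℕ) [NeZero n] (c : ZMod n) (hn : n ∣ L),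
      ∑ k ∈ Finset.range L, (if c - (k : ZMod n) = -1 then 0 else 1) = (L / n) * (n - 1) := by
    intro n _ c hn
    have hLn : L = (L / n) * n := (Nat.div_mul_cancel hn).symm
    conv_lhs => rw [hLn]
    rw [stmt3_sum_natCast_range_mul n (L/n) (fun x => if c - x = -1 then 0 else 1),
      ← stmt3_sum_zmod_eq_range n (fun x => if c - x = -1 then 0 else 1)]
    congr 1
    classical
    have hcomp : ∑ x : ZMod n, (if c - x = -1 then (0:ℕ) else 1)
        = ∑ y : ZMod n, (if y = -1 then (0:ℕ) else 1) :=
      Equiv.sum_comp (Equiv.subLeft c) (fun y => if y = -1 then (0:ℕ) else 1)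
    rw [hcomp]
    rw [Finset.sum_ite, Finset.sum_const_zero, zero_add, Finset.sum_const, smul_eq_mul, mul_one]
    rw [Finset.filter_ne', Finset.card_erase_of_mem (Finset.mem_univ _), Finset.card_univ,
      ZMod.card]
  rw [key a z.1 haL, key b z.2 hbL]
  -- arithmetic
  obtain ⟨a', ha'⟩ : Nat.gcd a b ∣ a := Nat.gcd_dvd_left a b
  obtain ⟨b', hb'⟩ : Nat.gcd a b ∣ b := Nat.gcd_dvd_right a b
  set d := Nat.gcd a b with hd
  have hd0 : 0 < d := Nat.gcd_pos_of_pos_left b ha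
  have ha'0 : 0 < a' := by
    rcases Nat.eq_zero_or_pos a' with h | h
    · exfalso; rw [h, mul_zero] at ha'; omega
    · exact h
  have hb'0 : 0 < b' := by
    rcases Nat.eq_zero_or_pos b' with h | h
    · exfalso; rw [h, mul_zero] at hb'; omega
    · exact h
  have hLval : L = d * a' * b' := by
    have h1 : d * L = a * b := Nat.gcd_mul_lcm a b
    have h2 : d * L = d * (d * a' * b') := by rw [h1, ha', hb']; ring
    exact Nat.eq_of_mul_eq_mul_left hd0 h2
  have hLa : L / a = b' := by
    rw [hLval, ha']
    rw [show d * a' * b' = (d * a') * b' from rfl, Nat.mul_div_cancel_left]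
    exact Nat.mul_pos hd0 ha'0
  have hLb : L / b = a' := by
    rw [hLval, hb']
    rw [show d * a' * b' = (d * b') * a' by ring, Nat.mul_div_cancel_left]
    exact Nat.mul_pos hd0 hb'0
  have hrhs : 2 * a * b - a - b = d * (2 * (d * a' * b') - a' - b') := by
    rw [ha', hb', Nat.mul_sub, Nat.mul_sub]
    congr 1
    congr 1 <;> ring
  rw [hLa, hLb, hrhs, Nat.mul_div_cancel_left _ hd0]
  have e1 : b' * (a - 1) = d * a' * b' - b' := by
    rw [ha', Nat.mul_sub]
    congr 1 <;> ring
  have e2 : a' * (b - 1) = d * a' * b' - a' := by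
    rw [hb', Nat.mul_sub]
    congr 1 <;> ring
  rw [e1, e2]
  have hNa : a' ≤ d * a' * b' :=
    le_trans (Nat.le_mul_of_pos_left a' hd0) (Nat.le_mul_of_pos_right (d * a') hb'0)
  have hNb : b' ≤ d * a' * b' := by
    calc b' ≤ (d * a') * b' := Nat.le_mul_of_pos_left b' (Nat.mul_pos hd0 ha'0)
    _ = d * a' * b' := by ring
  omega
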